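/- Let X be a finite set, P a probability distribution on X with full support, ρ ∈ (-1,0) ∪ (0,∞), α = 1/(1+ρ), and 𝒜 a partition of X into M nonempty blocks with partition function A (A(x) is the size of the block containing x). Then (1/ρ)·log(∑_x P(x)·A(x)^ρ) ≥ H_α(P) − log M, where H_α(P) = (1/(1-α)) log ∑_x P(x)^α. -/

import Mathlib

open Real Finset

/-- Two-function Hölder: `∑ u^θ v^(1-θ) ≤ (∑ u)^θ (∑ v)^(1-θ)` for `θ ∈ (0,1)`. -/
lemma hoelder_aux {ι : Type*} (s : Finset ι) (θ : ℝ) (hθ0 : 0 < θ) (hθ1 : θ < 1)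
    (u v : ι → ℝ) (hu : ∀ i ∈ s, 0 ≤ u i) (hv : ∀ i ∈ s, 0 ≤ v i) :
    ∑ i ∈ s, u i ^ θ * v i ^ (1 - θ) ≤ (∑ i ∈ s, u i) ^ θ * (∑ i ∈ s, v i) ^ (1 - θ) := by
  have h1θ : 0 < 1 - θ := by linarith
  have hpq : Real.HolderConjugate (1/θ) (1/(1-θ)) := by
    rw [Real.holderConjugate_iff]
    constructor
    · rw [lt_div_iff₀ hθ0]; linarith
    · rw [one_div, one_div, inv_inv, inv_inv]; ring
  have h := Real.inner_le_Lp_mul_Lq_of_nonneg s hpq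
    (f := fun i => u i ^ θ) (g := fun i => v i ^ (1 - θ))
    (fun i hi => Real.rpow_nonneg (hu i hi) θ)
    (fun i hi => Real.rpow_nonneg (hv i hi) (1 - θ))
  have e1 : ∀ i ∈ s, (u i ^ θ) ^ (1/θ) = u i := fun i hi => by
    rw [← Real.rpow_mul (hu i hi), mul_one_div, div_self hθ0.ne', Real.rpow_one]
  have e2 : ∀ i ∈ s, (v i ^ (1-θ)) ^ (1/(1-θ)) = v i := fun i hi => by
    rw [← Real.rpow_mul (hv i hi), mul_one_div, div_self h1θ.ne', Real.rpow_one]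
  calc ∑ i ∈ s, u i ^ θ * v i ^ (1 - θ)
      ≤ (∑ i ∈ s, (u i ^ θ) ^ (1/θ)) ^ (1/(1/θ)) *
        (∑ i ∈ s, (v i ^ (1-θ)) ^ (1/(1-θ))) ^ (1/(1/(1-θ))) := h
    _ = (∑ i ∈ s, u i) ^ θ * (∑ i ∈ s, v i) ^ (1 - θ) := by
        rw [Finset.sum_congr rfl e1, Finset.sum_congr rfl e2, one_div_one_div, one_div_one_div]

theorem stmt17 {X : Type*} [Fintype X] [DecidableEq X]
    (P : X → ℝ) (hP : ∀ x, 0 < P x) (hPsum : ∑ x, P x = 1)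
    (ρ : ℝ) (hρ : ρ ∈ Set.Ioo (-1 : ℝ) 0 ∪ Set.Ioi (0 : ℝ))
    (α : ℝ) (hα : α = 1 / (1 + ρ))
    (B : X → Finset X) (hmem : ∀ x, x ∈ B x)
    (hblock : ∀ x y, y ∈ B x → B y = B x)
    (M : ℕ) (hM : (Finset.univ.image B).card = M) :
    (1 / ρ) * Real.logb 2 (∑ x, P x * ((B x).card : ℝ) ^ ρ) ≥
      (1 / (1 - α)) * Real.logb 2 (∑ x, P x ^ α) - Real.logb 2 M := by
  have hX : Nonempty X := by
    by_contra h
    have : IsEmpty X := not_nonempty_iff.mp h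
    simp at hPsum
  -- basic facts about ρ, α
  have hρ1 : 0 < 1 + ρ := by
    rcases hρ with h | h
    · have := h.1; linarith
    · have := Set.mem_Ioi.mp h; linarith
  have hρ0 : ρ ≠ 0 := by
    rcases hρ with h | h
    · exact ne_of_lt h.2
    · exact ne_of_gt (Set.mem_Ioi.mp h)
  have hα0 : 0 < α := by rw [hα]; positivity
  -- A x := card of block, ≥ 1
  have hA1 : ∀ x, (1 : ℝ) ≤ ((B x).card : ℝ) := fun x => by
    exact_mod_cast Finset.card_pos.mpr ⟨x, hmem x⟩
  have hA0 : ∀ x, (0 : ℝ) < ((B x).card : ℝ) := fun x => lt_of_lt_of_le one_pos (hA1 x)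
  -- key identity : ∑ 1/A = M
  have hMsum : ∑ x : X, (((B x).card : ℝ))⁻¹ = (M : ℝ) := by
    rw [← hM]
    rw [Finset.card_eq_sum_ones (Finset.univ.image B)]
    push_cast
    rw [Finset.sum_image' (fun x => (((B x).card : ℝ))⁻¹)]
    intro i _
    have hfilt : (Finset.univ.filter fun j => B j = B i) = B i := by
      ext y
      simp only [Finset.mem_filter, Finset.mem_univ, true_and]
      constructor
      · intro h; rw [← h]; exact hmem y
      · intro h; exact hblock i y h
    rw [hfilt]
    rw [Finset.sum_congr rfl (fun y hy => by rw [hblock i y hy])]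
    rw [Finset.sum_const, nsmul_eq_mul, mul_inv_cancel₀ (hA0 i).ne']
  have hMpos : (0 : ℝ) < (M : ℝ) := by
    rw [← hMsum]
    exact Finset.sum_pos (fun x _ => inv_pos.mpr (hA0 x)) Finset.univ_nonempty
  -- positivity of the two sums
  set S : ℝ := ∑ x, P x * ((B x).card : ℝ) ^ ρ with hSdef
  set T : ℝ := ∑ x, P x ^ α with hTdef
  have hS : 0 < S := Finset.sum_pos (fun x _ => mul_pos (hP x) (Real.rpow_pos_of_pos (hA0 x) ρ))
    Finset.univ_nonempty
  have hT : 0 < T := Finset.sum_pos (fun x _ => Real.rpow_pos_of_pos (hP x) α)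
    Finset.univ_nonempty
  have hlogb_rpow : ∀ (x y : ℝ), 0 < x → Real.logb 2 (x ^ y) = y * Real.logb 2 x := by
    intro x y hx
    rw [Real.logb, Real.logb, Real.log_rpow hx]
    ring
  rcases hρ with hneg | hpos
  · -- case -1 < ρ < 0 : α > 1
    simp only [Set.mem_Ioo] at hneg
    have hθ0 : 0 < 1 + ρ := by linarith
    have hθ1 : 1 + ρ < 1 := by linarith
    have key : S ≤ T ^ (1 + ρ) * (M : ℝ) ^ (-ρ) := by
      have h := hoelder_aux Finset.univ (1 + ρ) hθ0 hθ1
        (fun x => P x ^ α) (fun x => (((B x).card : ℝ))⁻¹)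
        (fun x _ => (Real.rpow_pos_of_pos (hP x) α).le)
        (fun x _ => (inv_pos.mpr (hA0 x)).le)
      rw [hMsum] at h
      have heq : ∀ x : X, (P x ^ α) ^ (1 + ρ) * ((((B x).card : ℝ))⁻¹) ^ (1 - (1 + ρ))
          = P x * ((B x).card : ℝ) ^ ρ := by
        intro x
        rw [← Real.rpow_mul (hP x).le]
        have h1 : α * (1 + ρ) = 1 := by rw [hα]; field_simp
        rw [h1, Real.rpow_one, Real.inv_rpow (hA0 x).le, ← Real.rpow_neg (hA0 x).le]
        congr 2
        ring
      calc S = ∑ x, (P x ^ α) ^ (1 + ρ) * ((((B x).card : ℝ))⁻¹) ^ (1 - (1 + ρ)) :=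
            (Finset.sum_congr rfl (fun x _ => heq x)).symm
        _ ≤ T ^ (1 + ρ) * (M : ℝ) ^ (1 - (1 + ρ)) := h
        _ = T ^ (1 + ρ) * (M : ℝ) ^ (-ρ) := by ring_nf
    have hlog : Real.logb 2 S ≤ (1 + ρ) * Real.logb 2 T + (-ρ) * Real.logb 2 (M : ℝ) := by
      calc Real.logb 2 S ≤ Real.logb 2 (T ^ (1 + ρ) * (M : ℝ) ^ (-ρ)) :=
            Real.logb_le_logb_of_le one_lt_two hS key
        _ = (1 + ρ) * Real.logb 2 T + (-ρ) * Real.logb 2 (M : ℝ) := by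
            rw [Real.logb_mul (Real.rpow_pos_of_pos hT _).ne' (Real.rpow_pos_of_pos hMpos _).ne',
              hlogb_rpow _ _ hT, hlogb_rpow _ _ hMpos]
    have h1α : 1 / (1 - α) = (1 + ρ) / ρ := by
      rw [hα]; field_simp
      rw [add_sub_cancel_left, div_self hρ0]
    rw [ge_iff_le, h1α]
    have hle := mul_le_mul_of_nonpos_left hlog
      (show (1:ℝ)/ρ ≤ 0 by rw [one_div]; exact inv_nonpos.mpr hneg.2.le)
    have hmul : (1/ρ) * ((1 + ρ) * Real.logb 2 T + (-ρ) * Real.logb 2 (M : ℝ))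
        = (1 + ρ)/ρ * Real.logb 2 T - Real.logb 2 (M : ℝ) := by
      field_simp
      ring
    rw [hmul] at hle
    linarith
  · -- case ρ > 0 : 0 < α < 1
    simp only [Set.mem_Ioi] at hpos
    have hα1 : α < 1 := by
      rw [hα, div_lt_one hρ1]; linarith
    have key : T ≤ S ^ α * (M : ℝ) ^ (1 - α) := by
      have h := hoelder_aux Finset.univ α hα0 hα1
        (fun x => P x * ((B x).card : ℝ) ^ ρ) (fun x => (((B x).card : ℝ))⁻¹)
        (fun x _ => (mul_pos (hP x) (Real.rpow_pos_of_pos (hA0 x) ρ)).le)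
        (fun x _ => (inv_pos.mpr (hA0 x)).le)
      rw [hMsum] at h
      have heq : ∀ x : X, (P x * ((B x).card : ℝ) ^ ρ) ^ α * ((((B x).card : ℝ))⁻¹) ^ (1 - α)
          = P x ^ α := by
        intro x
        rw [Real.mul_rpow (hP x).le (Real.rpow_pos_of_pos (hA0 x) ρ).le,
          ← Real.rpow_mul (hA0 x).le, Real.inv_rpow (hA0 x).le, ← Real.rpow_neg (hA0 x).le]
        rw [mul_assoc, ← Real.rpow_add (hA0 x)]
        have h1 : ρ * α + -(1 - α) = 0 := by
          have h2 : (1 : ℝ) + ρ ≠ 0 := hρ1.ne'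
          rw [hα]; field_simp
          ring
        rw [h1, Real.rpow_zero, mul_one]
      calc T = ∑ x, (P x * ((B x).card : ℝ) ^ ρ) ^ α * ((((B x).card : ℝ))⁻¹) ^ (1 - α) :=
            (Finset.sum_congr rfl (fun x _ => (heq x))).symm
        _ ≤ S ^ α * (M : ℝ) ^ (1 - α) := h
    have hlog : Real.logb 2 T ≤ α * Real.logb 2 S + (1 - α) * Real.logb 2 (M : ℝ) := by
      calc Real.logb 2 T ≤ Real.logb 2 (S ^ α * (M : ℝ) ^ (1 - α)) :=
            Real.logb_le_logb_of_le one_lt_two hT key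
        _ = α * Real.logb 2 S + (1 - α) * Real.logb 2 (M : ℝ) := by
            rw [Real.logb_mul (Real.rpow_pos_of_pos hS _).ne' (Real.rpow_pos_of_pos hMpos _).ne',
              hlogb_rpow _ _ hS, hlogb_rpow _ _ hMpos]
    have h1α : 0 < 1 - α := by linarith
    have hmul := mul_le_mul_of_nonneg_left hlog (le_of_lt (by positivity : (0:ℝ) < 1/(1-α)))
    have heq2 : (1/(1-α)) * (α * Real.logb 2 S + (1 - α) * Real.logb 2 (M : ℝ))
        = (1/ρ) * Real.logb 2 S + Real.logb 2 (M : ℝ) := by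
      have hαρ : α * ρ = 1 - α := by
        have h2 : (1 : ℝ) + ρ ≠ 0 := hρ1.ne'
        rw [hα]; field_simp
        ring
      have h1αne : (1 - α) ≠ 0 := ne_of_gt h1α
      field_simp
      linear_combination Real.logb 2 S * hαρ
    rw [heq2] at hmul
    linarith
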